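/- Let π₁, π₂ be orthogonal projections on an N-dimensional real inner product space satisfying πᵢπ⊥ = π⊥πᵢ = πᵢ, where π⊥ projects onto (ker π₁ ∩ ker π₂)^⊥, and suppose range π₁ ∩ range π₂ = {0}. Define d = id + β((1+γ₂)π₁π₂ − γ₂π₁ − (1+γ₁)π₂π₁ + γ₁π₂), d⊥ = π⊥ d π⊥, and normalized traces t₁ = Tr(π₁)/N, t₂ = Tr(π₂)/N, t⊥ = Tr(π⊥)/N, t₁₂ = Tr(π₁π₂)/N, t₁₂₁₂ = Tr(π₁π₂π₁π₂)/N. Then (1/N)·Tr(d⊥ᵀ d⊥) = t⊥ + 2β[γ₁t₂ − γ₂t₁ + (γ₂−γ₁)t₁₂] + β²[γ₁²t₂ + γ₂²t₁ + (2 + 2(γ₁+γ₂) − (γ₁−γ₂)²)t₁₂ − 2(1+γ₁)(1+γ₂)t₁₂₁₂]. -/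

import Mathlib

set_option maxHeartbeats 1000000 in
theorem stmt_7
    {V : Type*} [NormedAddCommGroup V] [InnerProductSpace ℝ V] [FiniteDimensional ℝ V]
    (N : ℕ) (hN : Module.finrank ℝ V = N) (hNpos : 0 < N)
    (π₁ π₂ : V →ₗ[ℝ] V)
    (h₁s : π₁.IsSymmetric) (h₂s : π₂.IsSymmetric)
    (h₁i : π₁ ∘ₗ π₁ = π₁) (h₂i : π₂ ∘ₗ π₂ = π₂)
    (hrange : LinearMap.range π₁ ⊓ LinearMap.range π₂ = ⊥)
    (K : Submodule ℝ V) (hK : K = (LinearMap.ker π₁ ⊓ LinearMap.ker π₂)ᗮ)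
    (πp : V →ₗ[ℝ] V)
    (hπp : πp = K.subtype ∘ₗ (K.orthogonalProjectionOnto : V →L[ℝ] K).toLinearMap)
    (hperp₁ : π₁ ∘ₗ πp = π₁) (hperp₁' : πp ∘ₗ π₁ = π₁)
    (hperp₂ : π₂ ∘ₗ πp = π₂) (hperp₂' : πp ∘ₗ π₂ = π₂)
    (β γ₁ γ₂ : ℝ)
    (d : V →ₗ[ℝ] V)
    (hd : d = LinearMap.id +
      β • ((1 + γ₂) • (π₁ ∘ₗ π₂) - γ₂ • π₁ - (1 + γ₁) • (π₂ ∘ₗ π₁) + γ₁ • π₂))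
    (dp : V →ₗ[ℝ] V) (hdp : dp = πp ∘ₗ d ∘ₗ πp)
    (t₁ t₂ tp t₁₂ t₁₂₁₂ : ℝ)
    (ht₁ : t₁ = LinearMap.trace ℝ V π₁ / N)
    (ht₂ : t₂ = LinearMap.trace ℝ V π₂ / N)
    (htp : tp = LinearMap.trace ℝ V πp / N)
    (ht₁₂ : t₁₂ = LinearMap.trace ℝ V (π₁ ∘ₗ π₂) / N)
    (ht₁₂₁₂ : t₁₂₁₂ = LinearMap.trace ℝ V (π₁ ∘ₗ π₂ ∘ₗ π₁ ∘ₗ π₂) / N) :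
    LinearMap.trace ℝ V (LinearMap.adjoint dp ∘ₗ dp) / N =
      tp + 2 * β * (γ₁ * t₂ - γ₂ * t₁ + (γ₂ - γ₁) * t₁₂) +
        β ^ 2 * (γ₁ ^ 2 * t₂ + γ₂ ^ 2 * t₁ +
          (2 + 2 * (γ₁ + γ₂) - (γ₁ - γ₂) ^ 2) * t₁₂ -
          2 * (1 + γ₁) * (1 + γ₂) * t₁₂₁₂) := by
  have hN0 : (N : ℝ) ≠ 0 := Nat.cast_ne_zero.mpr hNpos.ne'
  set T := LinearMap.trace ℝ V with hT
  set p := π₁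
  set q := π₂
  set r := πp
  -- πp is symmetric and idempotent
  have hrs : r.IsSymmetric := by
    rw [hπp]; intro x y; exact K.inner_starProjection_left_eq_right x y
  have hri : r ∘ₗ r = r := by rw [hπp]; ext x; simp; exact congrArg (fun f => f x) K.isIdempotentElem_starProjection
  -- relations in End-ring form
  have hp : p * p = p := h₁i
  have hq : q * q = q := h₂i
  have hr : r * r = r := hri
  have hpr : p * r = p := hperp₁
  have hrp : r * p = p := hperp₁'
  have hqr : q * r = q := hperp₂
  have hrq : r * q = q := hperp₂'
  have hp' : ∀ x : V →ₗ[ℝ] V, p * (p * x) = p * x := fun x => by rw [← mul_assoc, hp]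
  have hq' : ∀ x : V →ₗ[ℝ] V, q * (q * x) = q * x := fun x => by rw [← mul_assoc, hq]
  have hr' : ∀ x : V →ₗ[ℝ] V, r * (r * x) = r * x := fun x => by rw [← mul_assoc, hr]
  have hpr' : ∀ x : V →ₗ[ℝ] V, p * (r * x) = p * x := fun x => by rw [← mul_assoc, hpr]
  have hrp' : ∀ x : V →ₗ[ℝ] V, r * (p * x) = p * x := fun x => by rw [← mul_assoc, hrp]
  have hqr' : ∀ x : V →ₗ[ℝ] V, q * (r * x) = q * x := fun x => by rw [← mul_assoc, hqr]
  have hrq' : ∀ x : V →ₗ[ℝ] V, r * (q * x) = q * x := fun x => by rw [← mul_assoc, hrq]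
  -- star facts
  have sp : star p = p := (LinearMap.isSymmetric_iff_isSelfAdjoint p).mp h₁s
  have sq : star q = q := (LinearMap.isSymmetric_iff_isSelfAdjoint q).mp h₂s
  have sr : star r = r := (LinearMap.isSymmetric_iff_isSelfAdjoint r).mp hrs
  -- explicit form of dp
  have hdp' : dp = r + β • ((1 + γ₂) • (p * q) - γ₂ • p - (1 + γ₁) • (q * p) + γ₁ • q) := by
    rw [hdp, hd]
    show r * ((LinearMap.id + β • ((1 + γ₂) • (p * q) - γ₂ • p - (1 + γ₁) • (q * p) + γ₁ • q)) * r) = _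
    rw [show (LinearMap.id : V →ₗ[ℝ] V) = 1 from rfl]
    simp only [mul_add, add_mul, mul_sub, sub_mul, smul_mul_assoc, mul_smul_comm,
      one_mul, mul_one, mul_assoc, hp, hq, hr, hpr, hrp, hqr, hrq,
      hp', hq', hr', hpr', hrp', hqr', hrq']
  -- adjoint of dp
  have hadj : LinearMap.adjoint dp
      = r + β • ((1 + γ₂) • (q * p) - γ₂ • p - (1 + γ₁) • (p * q) + γ₁ • q) := by
    rw [← LinearMap.star_eq_adjoint, hdp']
    simp only [star_add, star_sub, star_smul, star_mul, sp, sq, sr, star_trivial]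
  -- trace identities
  have tqp : T (q * p) = T (p * q) := LinearMap.trace_mul_comm ℝ q p
  have tpqp : T (p * (q * p)) = T (p * q) := by
    rw [← mul_assoc, LinearMap.trace_mul_comm ℝ (p * q) p, ← mul_assoc, hp]
  have tqpq : T (q * (p * q)) = T (p * q) := by
    rw [← mul_assoc, LinearMap.trace_mul_comm ℝ (q * p) q, hq' p, tqp]
  have t4 : T (q * (p * (q * p))) = T (p * (q * (p * q))) := by
    rw [LinearMap.trace_mul_comm ℝ q (p * (q * p))]
    simp only [mul_assoc]
    rfl
  have key : T (LinearMap.adjoint dp * dp)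
      = T r + 2 * β * (γ₁ * T q - γ₂ * T p + (γ₂ - γ₁) * T (p * q))
        + β ^ 2 * (γ₁ ^ 2 * T q + γ₂ ^ 2 * T p
          + (2 + 2 * (γ₁ + γ₂) - (γ₁ - γ₂) ^ 2) * T (p * q)
          - 2 * (1 + γ₁) * (1 + γ₂) * T (p * (q * (p * q)))) := by
    rw [hadj, hdp']
    simp only [mul_add, add_mul, mul_sub, sub_mul, smul_mul_assoc, mul_smul_comm,
      mul_assoc, hp, hq, hr, hpr, hrp, hqr, hrq,
      hp', hq', hr', hpr', hrp', hqr', hrq',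
      map_add, map_sub, map_smul, smul_eq_mul]
    rw [tqp, tpqp, tqpq, t4]
    ring
  have Tp : T p = t₁ * N := by rw [ht₁]; field_simp
  have Tq : T q = t₂ * N := by rw [ht₂]; field_simp
  have Tr : T r = tp * N := by rw [htp]; field_simp
  have Tpq : T (p * q) = t₁₂ * N := by rw [ht₁₂, ← Module.End.mul_eq_comp]; field_simp
  have Tpqpq : T (p * (q * (p * q))) = t₁₂₁₂ * N := by rw [ht₁₂₁₂]; simp only [← Module.End.mul_eq_comp]; field_simp
  rw [show LinearMap.adjoint dp ∘ₗ dp = LinearMap.adjoint dp * dp from rfl, key,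
    Tp, Tq, Tr, Tpq, Tpqpq]
  field_simp
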